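/- arXiv:1306.4143 — 4 statements merged into one kernel-verified Lean document; each statement's English description precedes it below -/
import Mathlib

section
/- Let n ≥ 4 and 2 ≤ a ≤ n−1 be integers. Let Q = ℂ[u₁,…,uₙ] and let J be the ideal generated by g_j := a·u_j^{a−1} − ∏_{k≠j} u_k for j = 1,…,n. Then for a polynomial p ∈ ℂ[T], the element p(u₁^a) lies in J if and only if T^{n−1} − a^a·T^{a−1} divides p. Equivalently, the kernel of the ℂ-algebra homomorphism ℂ[T] → Q/J sending T to the class of u₁^a is the ideal generated by T^{n−1} − a^a·T^{a−1}. -/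
open MvPolynomial

/-- The element `g_j = a·u_j^{a−1} − ∏_{k≠j} u_k` of the polynomial ring
`Q = ℂ[u₁,…,uₙ]`. Up to sign, this is the partial derivative `∂Z^n_a/∂u_j` of
`Z^n_a = −u₁⋯uₙ + Σ_j u_j^a`. -/
noncomputable def gPoly (n a : ℕ) (j : Fin n) : MvPolynomial (Fin n) ℂ :=
  (a : MvPolynomial (Fin n) ℂ) * X j ^ (a - 1) - ∏ k ∈ Finset.univ.erase j, X k

open scoped Classical

private lemma prod_prod_erase (n : ℕ) :
    ∏ j : Fin n, ∏ k ∈ Finset.univ.erase j, (X k : MvPolynomial (Fin n) ℂ)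
      = (∏ k : Fin n, (X k : MvPolynomial (Fin n) ℂ)) ^ (n - 1) := by
  rcases Nat.eq_zero_or_pos n with h | h
  · subst h; simp
  have hP : (∏ k : Fin n, (X k : MvPolynomial (Fin n) ℂ)) ≠ 0 :=
    Finset.prod_ne_zero_iff.mpr fun i _ => X_ne_zero i
  apply mul_right_cancel₀ hP
  have hn1 : n - 1 + 1 = n := by omega
  rw [← pow_succ, hn1, ← Finset.prod_mul_distrib,
    Finset.prod_congr rfl (fun j _ => Finset.prod_erase_mul _ _ (Finset.mem_univ j)),
    Finset.prod_const, Finset.card_univ, Fintype.card_fin]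

private lemma q_beta_mem (n a : ℕ) (hn : 4 ≤ n) (ha : 2 ≤ a) (han : a ≤ n - 1) :
    ((X (⟨0, Nat.lt_of_lt_of_le (by norm_num) hn⟩ : Fin n) : MvPolynomial (Fin n) ℂ) ^ a) ^ (n-1)
      - C ((a:ℂ)^a) * ((X (⟨0, Nat.lt_of_lt_of_le (by norm_num) hn⟩ : Fin n) : MvPolynomial (Fin n) ℂ) ^ a) ^ (a-1)
      ∈ Ideal.span (Set.range (gPoly n a)) := by
  set i0 : Fin n := ⟨0, by omega⟩
  set J := Ideal.span (Set.range (gPoly n a)) with hJ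
  let mk := Ideal.Quotient.mk J
  have hg : ∀ j : Fin n, (a : _) * mk (X j) ^ (a-1) = mk (∏ k ∈ Finset.univ.erase j, X k) := by
    intro j
    have hmem : gPoly n a j ∈ J := Ideal.subset_span ⟨j, rfl⟩
    have h0 := (Ideal.Quotient.eq_zero_iff_mem).mpr hmem
    rw [gPoly] at h0
    have h2 : mk ((a : MvPolynomial (Fin n) ℂ) * X j ^ (a - 1))
        = mk (∏ k ∈ Finset.univ.erase j, X k) := by
      rw [← sub_eq_zero, ← map_sub]; exact h0
    simpa using h2
  set M := mk (∏ k : Fin n, X k) with hM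
  have hr2 : ∀ j : Fin n, (a : _) * mk (X j) ^ a = M := by
    intro j
    calc (a : _) * mk (X j) ^ a = ((a : _) * mk (X j) ^ (a-1)) * mk (X j) := by
          rw [mul_assoc, ← pow_succ]; congr 2; omega
      _ = mk (∏ k ∈ Finset.univ.erase j, X k) * mk (X j) := by rw [hg j]
      _ = M := by
          rw [hM, ← map_mul]; congr 1
          exact Finset.prod_erase_mul _ _ (Finset.mem_univ j)
  have key : M ^ (n-1) = (a:_) ^ n * M ^ (a-1) := by
    have h1 : M ^ (n-1) = mk (∏ j : Fin n, ∏ k ∈ Finset.univ.erase j, X k) := by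
      rw [prod_prod_erase, map_pow]
    rw [h1, map_prod]
    calc ∏ j : Fin n, mk (∏ k ∈ Finset.univ.erase j, X k)
        = ∏ j : Fin n, (a:_) * mk (X j) ^ (a-1) :=
          Finset.prod_congr rfl fun j _ => (hg j).symm
      _ = (a:_)^n * ∏ j : Fin n, mk (X j) ^ (a-1) := by
          rw [Finset.prod_mul_distrib, Finset.prod_const, Finset.card_univ, Fintype.card_fin]
      _ = (a:_)^n * M ^ (a-1) := by
          rw [Finset.prod_pow, hM, map_prod]
  set B := mk (X i0) ^ a with hB
  have hr2' : (a : _) * B = M := hr2 i0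
  have e1 : (a:_)^(n-1) * B^(n-1) = M^(n-1) := by rw [← mul_pow, hr2']
  have e2 : (a:_)^(n-1) * ((a:_)^a * B^(a-1)) = (a:_)^n * M^(a-1) := by
    rw [← hr2', mul_pow, ← mul_assoc, ← mul_assoc, ← pow_add, ← pow_add]
    congr 2
    omega
  have hq : (a : MvPolynomial (Fin n) ℂ ⧸ J)^(n-1) * (B ^ (n-1) - (a:_)^a * B^(a-1)) = 0 := by
    rw [mul_sub, e1, e2, key, sub_self]
  have hAnz : ((a:ℂ))^(n-1) ≠ 0 := pow_ne_zero _ (by exact_mod_cast (by omega : a ≠ 0))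
  have hCcast : mk (C ((a:ℂ)^(n-1))) = (a : MvPolynomial (Fin n) ℂ ⧸ J)^(n-1) := by
    rw [map_pow (C : ℂ →+* MvPolynomial (Fin n) ℂ), map_natCast (C : ℂ →+* MvPolynomial (Fin n) ℂ),
      map_pow, map_natCast]
  have hCcast2 : mk (C ((a:ℂ)^a)) = (a : MvPolynomial (Fin n) ℂ ⧸ J)^a := by
    rw [map_pow (C : ℂ →+* MvPolynomial (Fin n) ℂ), map_natCast (C : ℂ →+* MvPolynomial (Fin n) ℂ),
      map_pow, map_natCast]
  have hmem2 : C ((a:ℂ)^(n-1)) * ((X i0 ^ a) ^ (n - 1) - C ((a:ℂ) ^ a) * (X i0 ^ a) ^ (a - 1)) ∈ J := by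
    rw [← Ideal.Quotient.eq_zero_iff_mem]
    show mk _ = 0
    rw [map_mul, hCcast, map_sub, map_mul, hCcast2, map_pow, map_pow, map_pow]
    exact hq
  have hfact : (X i0 ^ a) ^ (n - 1) - C ((a:ℂ) ^ a) * (X i0 ^ a) ^ (a - 1)
      = C (((a:ℂ)^(n-1))⁻¹) * (C ((a:ℂ)^(n-1)) * ((X i0 ^ a) ^ (n - 1) - C ((a:ℂ) ^ a) * (X i0 ^ a) ^ (a - 1))) := by
    rw [← mul_assoc, ← map_mul, inv_mul_cancel₀ hAnz, map_one, one_mul]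
  rw [hfact]
  exact Ideal.mul_mem_left _ _ hmem2

private lemma nat_id1 (n a : ℕ) (hn : 4 ≤ n) (ha : 2 ≤ a) (han : a ≤ n - 1) :
    a * (n - a) + (a - 1) = (n - 1) + (n - a) * (a - 1) := by
  zify [show 1 ≤ a by omega, show a ≤ n by omega, show 1 ≤ n by omega]
  ring

private lemma eval_at_root (n a : ℕ) (hn : 4 ≤ n) (ha : 2 ≤ a) (han : a ≤ n - 1)
    (p : Polynomial ℂ)
    (hp : Polynomial.aeval ((X (⟨0, Nat.lt_of_lt_of_le (by norm_num) hn⟩ : Fin n) : MvPolynomial (Fin n) ℂ) ^ a) p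
        ∈ Ideal.span (Set.range (gPoly n a)))
    (ζ : ℂ) (hζ : ζ ^ (n - a) = (a:ℂ) ^ a) :
    Polynomial.aeval ζ p = 0 := by
  have hane : (a:ℂ) ≠ 0 := by exact_mod_cast (by omega : a ≠ 0)
  have hζne : ζ ≠ 0 := by
    intro h; rw [h, zero_pow (by omega : n - a ≠ 0)] at hζ
    exact (pow_ne_zero a hane) hζ.symm
  obtain ⟨w, hw⟩ := IsAlgClosed.exists_pow_nat_eq ζ (by omega : 0 < a)
  have hwne : w ≠ 0 := fun h => hζne (by rw [← hw, h, zero_pow (by omega : a ≠ 0)])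
  set i0 : Fin n := ⟨0, by omega⟩
  set i1 : Fin n := ⟨1, by omega⟩
  have hi01 : i0 ≠ i1 := by simp [i0, i1, Fin.ext_iff]
  have hwm : (w : ℂ) ^ (n - a) ≠ 0 := pow_ne_zero _ hwne
  set d : ℂ := (a:ℂ) / w ^ (n - a) with hd
  have hdw : d * w ^ (n - a) = (a : ℂ) := div_mul_cancel₀ _ hwm
  set v : Fin n → ℂ := fun j => if j = i1 then d * w else w with hv
  have hv1 : v i1 = d * w := if_pos rfl
  have hvk : ∀ k, k ≠ i1 → v k = w := fun k hk => if_neg hk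
  have hζw : (a:ℂ) ^ a = w ^ (a * (n - a)) := by rw [pow_mul, hw, hζ]
  have hconst : ∀ s : Finset (Fin n), i1 ∉ s → ∏ k ∈ s, v k = w ^ s.card := by
    intro s hs
    rw [Finset.prod_congr rfl (g := fun _ => w) (fun k hk => hvk k (fun h => hs (h ▸ hk))),
      Finset.prod_const]
  have hgj : ∀ j : Fin n, (aeval v) (gPoly n a j) = 0 := by
    intro j
    rw [gPoly, map_sub, map_mul, map_pow, map_natCast, aeval_X, map_prod]
    simp only [aeval_X]
    by_cases hj : j = i1
    · subst hj
      have hprod : ∏ k ∈ Finset.univ.erase i1, v k = w ^ (n - 1) := by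
        rw [hconst _ (Finset.notMem_erase _ _), Finset.card_erase_of_mem (Finset.mem_univ _),
          Finset.card_univ, Fintype.card_fin]
      rw [hprod, hv1]
      have key : (a:ℂ) * (d * w) ^ (a - 1) * w ^ ((n - a) * (a - 1))
          = w ^ (n - 1) * w ^ ((n - a) * (a - 1)) := by
        have hda : d ^ (a-1) * w ^ ((n - a) * (a - 1)) = (a:ℂ) ^ (a-1) := by
          rw [pow_mul, ← mul_pow, hdw]
        calc (a:ℂ) * (d * w) ^ (a - 1) * w ^ ((n - a) * (a - 1))
            = (a:ℂ) * (d ^ (a-1) * w ^ ((n - a) * (a - 1))) * w ^ (a-1) := by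
              rw [mul_pow]; ring
          _ = (a:ℂ) * (a:ℂ) ^ (a-1) * w ^ (a-1) := by rw [hda]
          _ = (a:ℂ) ^ a * w ^ (a-1) := by
              congr 1
              rw [← pow_succ']; congr 1; omega
          _ = w ^ (a * (n-a) + (a-1)) := by rw [hζw, pow_add]
          _ = w ^ (n - 1) * w ^ ((n - a) * (a - 1)) := by
              rw [← pow_add, nat_id1 n a hn ha han]
      rw [mul_right_cancel₀ (pow_ne_zero _ hwne) key, sub_self]
    · have hprod : ∏ k ∈ Finset.univ.erase j, v k = (d * w) * w ^ (n - 2) := by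
        have hmem : i1 ∈ Finset.univ.erase j := Finset.mem_erase.mpr ⟨Ne.symm hj, Finset.mem_univ _⟩
        rw [← Finset.mul_prod_erase _ _ hmem, hv1,
          hconst _ (Finset.notMem_erase _ _), Finset.card_erase_of_mem hmem,
          Finset.card_erase_of_mem (Finset.mem_univ _), Finset.card_univ, Fintype.card_fin,
          show n - 1 - 1 = n - 2 by omega]
      rw [hprod, hvk j hj]
      have e : w * w ^ (n-2) = w ^ (n - a) * w ^ (a-1) := by
        rw [← pow_succ', ← pow_add]; congr 1; omega
      rw [mul_assoc, e, ← mul_assoc, hdw, sub_self]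
  have hker : Polynomial.aeval ((aeval v) ((X i0 : MvPolynomial (Fin n) ℂ) ^ a)) p = 0 := by
    rw [Polynomial.aeval_algHom_apply]
    have hsub : Ideal.span (Set.range (gPoly n a))
        ≤ RingHom.ker (aeval v : MvPolynomial (Fin n) ℂ →ₐ[ℂ] ℂ).toRingHom := by
      rw [Ideal.span_le]
      rintro f ⟨j, rfl⟩
      exact hgj j
    exact hsub hp
  rw [map_pow, aeval_X, hvk i0 hi01, hw] at hker
  exact hker

namespace Polynomial
private lemma divides_of_roots_and_coeffs (n a : ℕ) (hn : 4 ≤ n) (ha : 2 ≤ a) (han : a ≤ n - 1)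
    (p : Polynomial ℂ)
    (hcoeff : ∀ k < a - 1, p.coeff k = 0)
    (hroots : ∀ ζ : ℂ, ζ ^ (n - a) = (a:ℂ) ^ a → Polynomial.aeval ζ p = 0) :
    (X ^ (n - 1) - C ((a : ℂ) ^ a) * X ^ (a - 1)) ∣ p := by
  set c : ℂ := (a:ℂ)^a with hc
  have hcne : c ≠ 0 := pow_ne_zero _ (by exact_mod_cast (by omega : a ≠ 0))
  set q1 : Polynomial ℂ := X ^ (n - a) - C c with hq1
  have hfac : (X ^ (n - 1) - C c * X ^ (a - 1) : Polynomial ℂ) = X ^ (a-1) * q1 := by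
    rw [hq1, mul_sub, ← pow_add, show a - 1 + (n - a) = n - 1 by omega]
    ring
  obtain ⟨h, hh⟩ : (X : Polynomial ℂ) ^ (a-1) ∣ p := X_pow_dvd_iff.mpr hcoeff
  have hmono : q1.Monic := monic_X_pow_sub_C c (by omega : n - a ≠ 0)
  have hsep : q1.Separable := separable_X_pow_sub_C c
    (by exact_mod_cast (by omega : n - a ≠ 0) : ((n - a : ℕ) : ℂ) ≠ 0) hcne
  have hnodup : q1.roots.Nodup := nodup_roots hsep
  have hsplit : q1 = (q1.roots.map (fun z => X - C z)).prod :=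
    (IsAlgClosed.splits q1).eq_prod_roots_of_monic hmono
  have hqd : ∀ z ∈ q1.roots, z ^ (n - a) = c ∧ z ≠ 0 := by
    intro z hz
    have := isRoot_of_mem_roots hz
    rw [IsRoot, hq1] at this
    simp only [eval_sub, eval_pow, eval_X, eval_C] at this
    have hzc : z ^ (n-a) = c := by linear_combination this
    refine ⟨hzc, fun h0 => hcne ?_⟩
    rw [h0, zero_pow (by omega : n - a ≠ 0)] at hzc
    exact hzc.symm
  have hdvd1 : ∀ z ∈ q1.roots, (X - C z) ∣ h := by
    intro z hz
    obtain ⟨hzc, hz0⟩ := hqd z hz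
    rw [dvd_iff_isRoot, IsRoot]
    have hp0 : Polynomial.aeval z p = 0 := hroots z hzc
    rw [Polynomial.coe_aeval_eq_eval] at hp0
    rw [hh] at hp0
    simp only [eval_mul, eval_pow, eval_X] at hp0
    rcases mul_eq_zero.mp hp0 with h1 | h2
    · exact absurd h1 (pow_ne_zero _ hz0)
    · exact h2
  have hq1h : q1 ∣ h := by
    have hfin : q1.roots.toFinset.prod (fun z => X - C z)
        = (q1.roots.map (fun z => X - C z)).prod := by
      rw [Finset.prod, Multiset.toFinset_val, Multiset.dedup_eq_self.mpr hnodup]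
    rw [hsplit, ← hfin]
    apply Finset.prod_dvd_of_coprime
    · intro z hz z' hz' hne
      exact Polynomial.isCoprime_X_sub_C_of_isUnit_sub ((sub_ne_zero.mpr hne).isUnit)
    · intro z hz
      exact hdvd1 z (Multiset.mem_toFinset.mp hz)
  rw [hfac, hh]
  exact mul_dvd_mul_left _ hq1h
end Polynomial

/-- the set `F_k` of exponent vectors of the form `b·𝟙 + a·γ` with `b + |γ| = k`. -/
private def FF (n a k : ℕ) (d : Fin n → ℕ) : Prop :=
  ∃ (b : ℕ) (γ : Fin n → ℕ), b + ∑ j, γ j = k ∧ ∀ j, d j = b + a * γ j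

/-- the coefficient functional `ℓ_k`. -/
noncomputable def LL (n a k : ℕ) (s : ℂ) (f : MvPolynomial (Fin n) ℂ) : ℂ :=
  (AddMonoidAlgebra.coeff f).sum fun d c => if FF n a k d then c * s ^ (∑ j, d j) else 0

private lemma LL_zero (n a k : ℕ) (s : ℂ) : LL n a k s 0 = 0 := by
  unfold LL; simp

private lemma LL_add (n a k : ℕ) (s : ℂ) (f g : MvPolynomial (Fin n) ℂ) :
    LL n a k s (f + g) = LL n a k s f + LL n a k s g := by
  unfold LL
  rw [AddMonoidAlgebra.coeff_add]
  exact Finsupp.sum_add_index' (fun d => by split_ifs <;> simp)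
    (fun d c1 c2 => by split_ifs <;> ring)

private lemma LL_sum {ι : Type*} (n a k : ℕ) (s : ℂ) (t : Finset ι)
    (F : ι → MvPolynomial (Fin n) ℂ) :
    LL n a k s (∑ x ∈ t, F x) = ∑ x ∈ t, LL n a k s (F x) := by
  induction t using Finset.cons_induction with
  | empty => simp [LL_zero]
  | cons x t hx ih => rw [Finset.sum_cons, Finset.sum_cons, LL_add, ih]

private lemma LL_monomial (n a k : ℕ) (s : ℂ) (d : Fin n →₀ ℕ) (c : ℂ) :
    LL n a k s (monomial d c) = if FF n a k d then c * s ^ (∑ j, d j) else 0 := by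
  unfold LL
  rw [← single_eq_monomial, AddMonoidAlgebra.coeff_single, Finsupp.sum_single_index (by split_ifs <;> simp)]

private lemma prod_X_eq_monomial (n : ℕ) (t : Finset (Fin n)) :
    (∏ k ∈ t, (X k : MvPolynomial (Fin n) ℂ))
      = monomial (∑ k ∈ t, Finsupp.single k 1) 1 := by
  induction t using Finset.induction_on with
  | empty => simp
  | insert _ _ hx ih =>
      rw [Finset.prod_insert hx, Finset.sum_insert hx, ih, MvPolynomial.X,
        monomial_mul, one_mul]

/-- key combinatorial lemma: the step `(a-1)·e_j ↔ 𝟙 - e_j` preserves `F_k`. -/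
private lemma FF_step (n a k : ℕ) (hn : 4 ≤ n) (ha : 2 ≤ a) (han : a ≤ n - 1)
    (hk : k ≤ a - 2) (c : Fin n → ℕ) (j : Fin n) :
    FF n a k (fun i => c i + if i = j then a - 1 else 0)
      ↔ FF n a k (fun i => c i + if i = j then 0 else 1) := by
  constructor
  · rintro ⟨b, γ, hsum, heq⟩
    have hb : b ≤ k := by omega
    have hγj : 1 ≤ γ j := by
      by_contra h
      have h0 : γ j = 0 := by omega
      have h1 := heq j
      simp [h0] at h1
      omega
    refine ⟨b + 1, Function.update γ j (γ j - 1), ?_, ?_⟩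
    · rw [Finset.sum_update_of_mem (Finset.mem_univ j)]
      rw [← Finset.add_sum_erase _ γ (Finset.mem_univ j), Finset.erase_eq] at hsum
      omega
    · intro i
      by_cases hij : i = j
      · subst hij
        have h1 := heq i
        simp only [if_pos rfl] at h1
        simp only [if_pos rfl, Function.update_self]
        obtain ⟨g, hg⟩ : ∃ g, γ i = g + 1 := ⟨γ i - 1, by omega⟩
        rw [hg, Nat.mul_add, Nat.mul_one] at h1
        rw [hg, Nat.add_sub_cancel]
        simp at h1 ⊢
        omega
      · have h1 := heq i
        simp only [if_neg hij] at h1 ⊢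
        rw [Function.update_of_ne hij]
        omega
  · rintro ⟨b, γ, hsum, heq⟩
    have hb : b ≤ k := by omega
    have hbpos : 1 ≤ b := by
      by_contra hb0
      have hb0' : b = 0 := by omega
      have hγ : ∀ i, i ≠ j → 1 ≤ γ i := by
        intro i hij
        have h1 := heq i
        simp only [if_neg hij, hb0', Nat.zero_add] at h1
        rcases Nat.eq_zero_or_pos (γ i) with h2 | h2
        · rw [h2, Nat.mul_zero] at h1; omega
        · exact h2
      have hcard : (n - 1) ≤ ∑ i, γ i := by
        calc (n-1) = ∑ _i ∈ Finset.univ.erase j, 1 := by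
              rw [Finset.sum_const, smul_eq_mul, mul_one,
                Finset.card_erase_of_mem (Finset.mem_univ _), Finset.card_univ,
                Fintype.card_fin]
          _ ≤ ∑ i ∈ Finset.univ.erase j, γ i :=
              Finset.sum_le_sum (fun i hi => hγ i (Finset.mem_erase.mp hi).1)
          _ ≤ ∑ i, γ i := Finset.sum_le_sum_of_subset (Finset.erase_subset _ _)
      omega
    refine ⟨b - 1, Function.update γ j (γ j + 1), ?_, ?_⟩
    · rw [Finset.sum_update_of_mem (Finset.mem_univ j)]
      rw [← Finset.add_sum_erase _ γ (Finset.mem_univ j), Finset.erase_eq] at hsum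
      omega
    · intro i
      by_cases hij : i = j
      · subst hij
        have h1 := heq i
        simp only [if_pos rfl] at h1
        simp only [if_pos rfl, Function.update_self, Nat.mul_add, Nat.mul_one]
        simp at h1 ⊢
        omega
      · have h1 := heq i
        simp only [if_neg hij] at h1 ⊢
        rw [Function.update_of_ne hij]
        omega

/-- `a·k'·e₀ ∈ F_k ↔ k' = k`. -/
private lemma FF_single (n a k k' : ℕ) (hn : 4 ≤ n) (ha : 2 ≤ a) :
    FF n a k (fun i => if i = (⟨0, Nat.lt_of_lt_of_le (by norm_num) hn⟩ : Fin n) then a * k' else 0) ↔ k' = k := by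
  set i0 : Fin n := ⟨0, by omega⟩
  constructor
  · rintro ⟨b, γ, hsum, heq⟩
    set i1 : Fin n := ⟨1, by omega⟩
    have hi : i1 ≠ i0 := by simp [i0, i1, Fin.ext_iff]
    have hzero : ∀ i, i ≠ i0 → b = 0 ∧ γ i = 0 := by
      intro i hi0
      have h1 := heq i
      simp only [if_neg hi0] at h1
      have hx : a * γ i = 0 ∧ b = 0 := by omega
      rcases Nat.mul_eq_zero.mp hx.1 with h | h
      · omega
      · exact ⟨hx.2, h⟩
    have hb0 : b = 0 := (hzero i1 hi).1
    have hγ0 : ∀ i, i ≠ i0 → γ i = 0 := fun i h => (hzero i h).2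
    have h0 := heq i0
    simp only [if_pos rfl, hb0, Nat.zero_add] at h0
    have hγi0 : γ i0 = k' :=
      (Nat.eq_of_mul_eq_mul_left (by omega) h0.symm)
    rw [← hsum, hb0, Nat.zero_add, Finset.sum_eq_single i0 (fun i _ h => hγ0 i h)
      (fun h => absurd (Finset.mem_univ i0) h), hγi0]
  · intro h
    subst h
    refine ⟨0, fun i => if i = i0 then k' else 0, ?_, ?_⟩
    · simp
    · intro i
      by_cases hi : i = i0 <;> simp [hi]


private lemma LL_sub (n a k : ℕ) (s : ℂ) (f g : MvPolynomial (Fin n) ℂ) :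
    LL n a k s (f - g) = LL n a k s f - LL n a k s g := by
  have h := LL_add n a k s (f - g) g
  rw [sub_add_cancel] at h
  rw [h]; ring

private lemma coe_add_single (n m : ℕ) (d : Fin n →₀ ℕ) (j : Fin n) :
    ⇑(d + Finsupp.single j m) = fun i => d i + if i = j then m else 0 := by
  funext i
  rw [Finsupp.add_apply, Finsupp.single_apply]
  by_cases h : i = j
  · subst h; simp
  · simp [h, Ne.symm h]

private lemma coe_add_D2 (n : ℕ) (d : Fin n →₀ ℕ) (j : Fin n) :
    ⇑(d + (∑ k ∈ Finset.univ.erase j, Finsupp.single k 1 : Fin n →₀ ℕ))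
      = fun i => d i + if i = j then 0 else 1 := by
  funext i
  rw [Finsupp.add_apply, Finsupp.finset_sum_apply]
  congr 1
  by_cases h : i = j
  · subst h
    rw [if_pos rfl]
    exact Finset.sum_eq_zero fun k hk =>
      Finsupp.single_eq_of_ne' (Finset.mem_erase.mp hk).1
  · rw [if_neg h,
      Finset.sum_congr rfl (fun k _ => Finsupp.single_apply (a := k) (b := (1:ℕ)) (a' := i))]
    have hmem : i ∈ Finset.univ.erase j := Finset.mem_erase.mpr ⟨h, Finset.mem_univ _⟩
    rw [Finset.sum_ite_eq' (Finset.univ.erase j) i (fun _ => (1:ℕ)), if_pos hmem]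

private lemma sum_coe_add_single (n m : ℕ) (d : Fin n →₀ ℕ) (j : Fin n) (hn : 0 < n) :
    ∑ i, (d i + if i = j then m else 0) = (∑ i, d i) + m := by
  rw [Finset.sum_add_distrib]
  congr 1
  simp

private lemma sum_coe_add_D2 (n : ℕ) (d : Fin n →₀ ℕ) (j : Fin n) (hn : 0 < n) :
    ∑ i, (d i + if i = j then 0 else 1) = (∑ i, d i) + (n - 1) := by
  rw [Finset.sum_add_distrib]
  congr 1
  rw [← Finset.add_sum_erase _ _ (Finset.mem_univ j), if_pos rfl,
    Finset.sum_congr rfl (fun i hi => if_neg (Finset.mem_erase.mp hi).1),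
    Finset.sum_const, smul_eq_mul, mul_one, Nat.zero_add,
    Finset.card_erase_of_mem (Finset.mem_univ _), Finset.card_univ, Fintype.card_fin]

private lemma LL_mul_g (n a k : ℕ) (hn : 4 ≤ n) (ha : 2 ≤ a) (han : a ≤ n - 1)
    (hk : k ≤ a - 2) (s : ℂ) (hs : s ^ (n - a) = (a : ℂ))
    (d : Fin n →₀ ℕ) (c : ℂ) (j : Fin n) :
    LL n a k s (monomial d c * gPoly n a j) = 0 := by
  have hgrep : gPoly n a j
      = monomial (Finsupp.single j (a-1)) ((a:ℂ))
        - monomial (∑ k ∈ Finset.univ.erase j, Finsupp.single k 1) 1 := by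
    rw [gPoly, prod_X_eq_monomial, X_pow_eq_monomial]
    congr 1
    rw [show ((a:ℕ) : MvPolynomial (Fin n) ℂ) = C ((a:ℕ) : ℂ) by push_cast; rfl,
      C_mul_monomial, mul_one]
  rw [hgrep, mul_sub, monomial_mul, monomial_mul, LL_sub, LL_monomial, LL_monomial]
  rw [coe_add_single, coe_add_D2, sum_coe_add_single n (a-1) d j (by omega),
    sum_coe_add_D2 n d j (by omega)]
  by_cases hFF : FF n a k (fun i => d i + if i = j then a - 1 else 0)
  · rw [if_pos hFF, if_pos ((FF_step n a k hn ha han hk d j).mp hFF)]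
    have hpow : s ^ (∑ i, d i + (n - 1)) = s ^ (∑ i, d i + (a - 1)) * s ^ (n - a) := by
      rw [← pow_add]; congr 1; omega
    rw [hpow, hs]
    ring
  · rw [if_neg hFF, if_neg (fun h => hFF ((FF_step n a k hn ha han hk d j).mpr h))]
    ring

private lemma coeff_vanish (n a : ℕ) (hn : 4 ≤ n) (ha : 2 ≤ a) (han : a ≤ n - 1)
    (p : Polynomial ℂ)
    (hp : Polynomial.aeval ((X (⟨0, Nat.lt_of_lt_of_le (by norm_num) hn⟩ : Fin n) : MvPolynomial (Fin n) ℂ) ^ a) p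
        ∈ Ideal.span (Set.range (gPoly n a))) :
    ∀ k, k < a - 1 → p.coeff k = 0 := by
  set i0 : Fin n := ⟨0, by omega⟩
  intro k hk
  have hk' : k ≤ a - 2 := by omega
  obtain ⟨s, hs⟩ := IsAlgClosed.exists_pow_nat_eq ((a:ℂ)) (n := n - a) (by omega)
  have hane : (a:ℂ) ≠ 0 := by exact_mod_cast (by omega : a ≠ 0)
  have hsne : s ≠ 0 := fun h => hane (by rw [← hs, h, zero_pow (by omega : n - a ≠ 0)])
  obtain ⟨cf, hcf⟩ := Ideal.mem_span_range_iff_exists_fun.mp hp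
  -- LL kills the combination
  have hLg : ∀ (f : MvPolynomial (Fin n) ℂ) (j : Fin n),
      LL n a k s (f * gPoly n a j) = 0 := by
    intro f j
    induction f using MvPolynomial.induction_on' with
    | monomial u c => exact LL_mul_g n a k hn ha han hk' s hs u c j
    | add f g hf hg => rw [add_mul, LL_add, hf, hg, add_zero]
  have hz : LL n a k s (Polynomial.aeval ((X i0 : MvPolynomial (Fin n) ℂ) ^ a) p) = 0 := by
    rw [← hcf, LL_sum]
    exact Finset.sum_eq_zero fun j _ => hLg (cf j) j
  -- compute the LL value
  have hrep : Polynomial.aeval ((X i0 : MvPolynomial (Fin n) ℂ) ^ a) p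
      = ∑ e ∈ p.support, monomial (Finsupp.single i0 (a * e)) (p.coeff e) := by
    rw [Polynomial.aeval_def, Polynomial.eval₂_eq_sum, Polynomial.sum_def]
    apply Finset.sum_congr rfl
    intro e _
    rw [MvPolynomial.algebraMap_eq, ← pow_mul, X_pow_eq_monomial, C_mul_monomial, mul_one]
  rw [hrep, LL_sum] at hz
  have hterm : ∀ e : ℕ,
      LL n a k s (monomial (Finsupp.single i0 (a * e)) (p.coeff e))
        = if e = k then p.coeff e * s ^ (a * e) else 0 := by
    intro e
    rw [LL_monomial]
    have hcoe : ⇑(Finsupp.single i0 (a * e)) = fun i => if i = i0 then a * e else 0 := by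
      funext i
      rw [Finsupp.single_apply]
      by_cases h : i = i0
      · subst h; simp
      · simp [h, Ne.symm h]
    rw [hcoe, if_congr (FF_single n a k e hn ha) rfl rfl]
    simp
  rw [Finset.sum_congr rfl (fun e _ => hterm e)] at hz
  rw [Finset.sum_eq_single k (fun e _ he => if_neg he)
    (fun hnm => by rw [Polynomial.notMem_support_iff.mp hnm]; simp)] at hz
  rw [if_pos rfl] at hz
  exact (mul_eq_zero.mp hz).resolve_right (pow_ne_zero _ hsne)

/-- For `n ≥ 4` and `2 ≤ a ≤ n−1`, in `Q = ℂ[u₁,…,uₙ]` with `J` the ideal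
generated by `g₁,…,gₙ`: for a polynomial `p ∈ ℂ[T]`, the element `p(u₁^a)` lies in `J`
iff `T^{n−1} − a^a·T^{a−1}` divides `p`.  (Equivalently, the kernel of `ℂ[T] → Q/J`,
`T ↦ [u₁^a]`, is the ideal `(T^{n−1} − a^a·T^{a−1})`.) -/
theorem kernel_of_polynomial_map_to_jacobian_ring
    (n a : ℕ) (hn : 4 ≤ n) (ha : 2 ≤ a) (han : a ≤ n - 1) (p : Polynomial ℂ) :
    Polynomial.aeval ((X (⟨0, by omega⟩ : Fin n) : MvPolynomial (Fin n) ℂ) ^ a) p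
        ∈ Ideal.span (Set.range (gPoly n a))
      ↔ (Polynomial.X ^ (n - 1)
          - Polynomial.C ((a : ℂ) ^ a) * Polynomial.X ^ (a - 1)) ∣ p := by
  constructor
  · intro hp
    exact Polynomial.divides_of_roots_and_coeffs n a hn ha han p
      (fun k hk => coeff_vanish n a hn ha han p hp k hk)
      (fun z hz => eval_at_root n a hn ha han p hp z hz)
  · rintro ⟨t, rfl⟩
    rw [map_mul]
    apply Ideal.mul_mem_right
    have : Polynomial.aeval ((X (⟨0, by omega⟩ : Fin n) : MvPolynomial (Fin n) ℂ) ^ a)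
        (Polynomial.X ^ (n - 1) - Polynomial.C ((a : ℂ) ^ a) * Polynomial.X ^ (a - 1))
        = ((X (⟨0, by omega⟩ : Fin n) : MvPolynomial (Fin n) ℂ) ^ a) ^ (n-1)
          - C ((a:ℂ)^a) * ((X (⟨0, by omega⟩ : Fin n) : MvPolynomial (Fin n) ℂ) ^ a) ^ (a-1) := by
      simp [MvPolynomial.algebraMap_eq]
    rw [this]
    exact q_beta_mem n a hn ha han
end

section
/- Let n ≥ 4 and 2 ≤ a ≤ n−1 be integers. Suppose q ∈ ℤ, c : {1,…,n} → ℕ, and K₀, K₁ are subsets of {1,…,n} satisfying: (i) (n−2)·q + (2−a)·(Σ_k c_k) = 1, and (ii) for every k ∈ {1,…,n}, a·c_k + [k ∈ K₀] = [k ∈ K₁] + q, where [k ∈ K] denotes 1 if k ∈ K and 0 otherwise. Then K₀ = ∅ and K₁ = {1,…,n}. -/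
/-- For `n ≥ 4` and `2 ≤ a ≤ n−1`: if `q ∈ ℤ`, `c : {1,…,n} → ℕ`, and
subsets `K₀, K₁ ⊆ {1,…,n}` satisfy (i) `(n−2)·q + (2−a)·Σ_k c_k = 1` and
(ii) `a·c_k + [k ∈ K₀] = [k ∈ K₁] + q` for every `k`, then `K₀ = ∅` and `K₁ = {1,…,n}`. -/
theorem grading_constraint_forces_top_generator
    (n a : ℕ) (hn : 4 ≤ n) (ha : 2 ≤ a) (han : a ≤ n - 1)
    (q : ℤ) (c : Fin n → ℕ) (K₀ K₁ : Finset (Fin n))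
    (h1 : ((n : ℤ) - 2) * q + (2 - (a : ℤ)) * (∑ k, (c k : ℤ)) = 1)
    (h2 : ∀ k, (a : ℤ) * (c k : ℤ) + (if k ∈ K₀ then 1 else 0)
      = (if k ∈ K₁ then 1 else 0) + q) :
    K₀ = ∅ ∧ K₁ = Finset.univ := by
  have hna : (a : ℤ) ≤ (n : ℤ) - 1 := by
    have : (a : ℤ) ≤ ((n - 1 : ℕ) : ℤ) := by exact_mod_cast han
    omega
  have hn' : (4 : ℤ) ≤ (n : ℤ) := by exact_mod_cast hn
  have ha2 : (2 : ℤ) ≤ (a : ℤ) := by exact_mod_cast ha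
  -- Step 1: a ≥ 3
  have ha3 : (3 : ℤ) ≤ (a : ℤ) := by
    by_contra h
    have haeq : (a : ℤ) = 2 := by omega
    rw [haeq] at h1
    have hq : ((n : ℤ) - 2) * q = 1 := by linarith
    have hdvd : ((n : ℤ) - 2) ∣ 1 := ⟨q, hq.symm⟩
    have := Int.le_of_dvd (by norm_num) hdvd
    omega
  -- the "direction" function
  set d : Fin n → ℤ := fun k => (if k ∈ K₁ then (1 : ℤ) else 0) - (if k ∈ K₀ then 1 else 0)
    with hd
  have hck : ∀ k, (a : ℤ) * (c k : ℤ) = q + d k := by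
    intro k
    have := h2 k
    simp only [hd]
    linarith
  have hdbound : ∀ k, d k = -1 ∨ d k = 0 ∨ d k = 1 := by
    intro k
    simp only [hd]
    split <;> split <;> norm_num
  -- Step 2: d is constant
  have hconst : ∀ j k, d j = d k := by
    intro j k
    by_contra hne
    have hdvd : (a : ℤ) ∣ (d j - d k) :=
      ⟨(c j : ℤ) - (c k : ℤ), by rw [mul_sub]; linarith [hck j, hck k]⟩
    have h1' : d j - d k ≠ 0 := fun h => hne (by linarith)
    have hle := Int.le_of_dvd (abs_pos.mpr h1') ((dvd_abs _ _).mpr hdvd)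
    rcases hdbound j with h | h | h <;> rcases hdbound k with h' | h' | h' <;>
      rw [h, h'] at hle <;> simp at hle <;> omega
  -- the common value
  have hn0 : 0 < n := by omega
  set k₀ : Fin n := ⟨0, hn0⟩
  -- Step 3: a * S = n * (q + d k₀)
  have hS : (a : ℤ) * (∑ k, (c k : ℤ)) = (n : ℤ) * (q + d k₀) := by
    rw [Finset.mul_sum]
    have : ∀ k ∈ Finset.univ, (a : ℤ) * (c k : ℤ) = q + d k₀ := by
      intro k _
      rw [hck k, hconst k k₀]
    rw [Finset.sum_congr rfl this, Finset.sum_const, Finset.card_univ, Fintype.card_fin]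
    ring
  -- key equation: 2 q (n - a) = a + (a-2) n d k₀
  have key : 2 * q * ((n : ℤ) - a) = a + ((a : ℤ) - 2) * n * d k₀ := by
    nlinarith [h1, hS]
  have hck₀ := hck k₀
  have hcnn : (0 : ℤ) ≤ (c k₀ : ℤ) := Int.ofNat_nonneg _
  rcases hdbound k₀ with h | h | h
  · -- d k₀ = -1 : q ≥ 1 but RHS of key is negative
    exfalso
    have hq1 : 1 ≤ q := by
      have : (0:ℤ) ≤ (a : ℤ) * (c k₀ : ℤ) := by positivity
      rw [hck₀, h] at this; omega
    rw [h] at key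
    nlinarith
  · -- d k₀ = 0 : a ∣ q, 2 q (n-a) = a
    exfalso
    rw [h] at key
    have hq : (a : ℤ) * (c k₀ : ℤ) = q := by rw [hck₀, h]; ring
    have hqpos : 0 < q := by nlinarith
    have : (a : ℤ) ≤ q := by
      rcases Nat.eq_zero_or_pos (c k₀) with hc | hc
      · exfalso; rw [hc] at hq; simp at hq; omega
      · have : (1:ℤ) ≤ (c k₀ : ℤ) := by exact_mod_cast hc
        nlinarith
    nlinarith
  · -- d k₀ = 1 : conclusion
    have hall : ∀ k, k ∉ K₀ ∧ k ∈ K₁ := by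
      intro k
      have hk : d k = 1 := by rw [hconst k k₀, h]
      simp only [hd] at hk
      constructor
      · intro hmem
        by_cases h1 : k ∈ K₁ <;> simp [hmem, h1] at hk
      · by_contra h1
        by_cases h0 : k ∈ K₀ <;> simp [h0, h1] at hk
    constructor
    · exact Finset.eq_empty_of_forall_notMem fun k => (hall k).1
    · exact Finset.eq_univ_of_forall fun k => (hall k).2
end

section
/- Let n ≥ 4 and 2 ≤ a ≤ n−1 be integers. There do not exist q ∈ ℤ, functions c, b : {1,…,n} → ℕ, and a subset K ⊆ {1,…,n} such that: (i) c_k ≥ 1 for every k; (ii) Σ_k b_k ≥ 2; (iii) 2 − Σ_k b_k = (n−2)·q + (2−a)·(Σ_k c_k); and (iv) for every k, [k ∈ K] + a·c_k = q + b_k, where [k ∈ K] denotes 1 if k ∈ K and 0 otherwise. -/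
/-- For `n ≥ 4` and `2 ≤ a ≤ n−1`, there are no `q ∈ ℤ`,
`c, b : {1,…,n} → ℕ`, and `K ⊆ {1,…,n}` such that: (i) `c_k ≥ 1` for all `k`;
(ii) `Σ_k b_k ≥ 2`; (iii) `2 − Σ_k b_k = (n−2)·q + (2−a)·Σ_k c_k`; and
(iv) `[k ∈ K] + a·c_k = q + b_k` for every `k`. -/
theorem no_higher_order_deformation_classes
    (n a : ℕ) (hn : 4 ≤ n) (ha : 2 ≤ a) (han : a ≤ n - 1) :
    ¬ ∃ (q : ℤ) (c b : Fin n → ℕ) (K : Finset (Fin n)),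
        (∀ k, 1 ≤ c k) ∧
        (2 ≤ ∑ k, b k) ∧
        (2 - (∑ k, (b k : ℤ)) = ((n : ℤ) - 2) * q + (2 - (a : ℤ)) * ∑ k, (c k : ℤ)) ∧
        (∀ k, (if k ∈ K then (1 : ℤ) else 0) + (a : ℤ) * (c k : ℤ) = q + (b k : ℤ)) := by
  rintro ⟨q, c, b, K, hc, hB, h3, h4⟩
  -- sum the pointwise equation
  have hsum : (K.card : ℤ) + (a : ℤ) * ∑ k, (c k : ℤ) = (n : ℤ) * q + ∑ k, (b k : ℤ) := by
    have h := Finset.sum_congr (rfl : (Finset.univ : Finset (Fin n)) = Finset.univ)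
      (fun k _ => h4 k)
    rw [Finset.sum_add_distrib, Finset.sum_add_distrib, ← Finset.mul_sum] at h
    simpa [Finset.sum_ite_mem, mul_comm] using h
  set C : ℤ := ∑ k, (c k : ℤ) with hC
  set B : ℤ := ∑ k, (b k : ℤ) with hBdef
  have hCn : (n : ℤ) ≤ C := by
    calc (n : ℤ) = ∑ _k : Fin n, (1 : ℤ) := by simp
    _ ≤ C := Finset.sum_le_sum (fun k _ => by exact_mod_cast hc k)
  have hB2 : (2 : ℤ) ≤ B := by
    have : ((2 : ℕ) : ℤ) ≤ ((∑ k, b k : ℕ) : ℤ) := Int.ofNat_le.mpr hB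
    simpa [hBdef, Nat.cast_sum] using this
  have hκ : (0 : ℤ) ≤ (K.card : ℤ) := Int.natCast_nonneg _
  have han' : (a : ℤ) ≤ (n : ℤ) - 1 := by
    have : (a : ℤ) ≤ ((n - 1 : ℕ) : ℤ) := Int.ofNat_le.mpr han
    omega
  have hn' : (4 : ℤ) ≤ (n : ℤ) := by exact_mod_cast hn
  have ha' : (2 : ℤ) ≤ (a : ℤ) := by exact_mod_cast ha
  -- key linear relation: κ + 2C = 2q + 2
  have hkey : (K.card : ℤ) + 2 * C = 2 * q + 2 := by nlinarith [hsum, h3]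
  nlinarith [hkey, h3, hB2, hCn, hκ, mul_le_mul_of_nonneg_right han' (le_trans (by norm_num) hCn),
    mul_nonneg (by linarith : (0:ℤ) ≤ (n:ℤ) - 2) hκ]
end

section
/- Let N ≥ 0 be an integer, let V_{−1}, V_0, …, V_N be complex vector spaces, and set M := V_{−1} ⊕ V_0 ⊕ ⋯ ⊕ V_N (with V_k understood to be the zero space for k < −1 or k > N). Suppose d : M → M is a ℂ-linear map with d ∘ d = 0, which decomposes as d = Σ_{i ≥ 0} d^{(i)}, where each d^{(i)} : M → M is a ℂ-linear map sending V_k into V_{k+1−2i} for every k (only finitely many d^{(i)} are nonzero, by boundedness of the grading). Suppose there exists a ℂ-linear map h : M → M sending V_k into V_{k−1} for every k and satisfying d^{(0)} ∘ h + h ∘ d^{(0)} = id_M. Then there exists a ℂ-linear map H : M → M with d ∘ H + H ∘ d = id_M; in particular the complex (M, d) is acyclic. -/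
/-- Let `M` be a complex vector space which is the internal direct sum of
subspaces `V k` indexed by `k ∈ ℤ`, with `V k = 0` unless `−1 ≤ k ≤ N`.  Let
`d : M → M` be ℂ-linear with `d ∘ d = 0`, decomposing as `d = Σ_{i ≥ 0} D i` where each
`D i` sends `V k` into `V (k + 1 − 2i)` (only finitely many `D i` are nonzero).  If
there is a ℂ-linear `h : M → M` sending `V k` into `V (k − 1)` with
`D 0 ∘ h + h ∘ D 0 = id`, then there is a ℂ-linear `H : M → M` with
`d ∘ H + H ∘ d = id`; in particular `(M, d)` is acyclic. -/
theorem contracting_homotopy_of_leading_term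
    (N : ℕ) (M : Type*) [AddCommGroup M] [Module ℂ M]
    (V : ℤ → Submodule ℂ M)
    (hV : DirectSum.IsInternal V)
    (hVbdd : ∀ k : ℤ, (k < -1 ∨ (N : ℤ) < k) → V k = ⊥)
    (d : M →ₗ[ℂ] M) (hd2 : d ∘ₗ d = 0)
    (D : ℕ → (M →ₗ[ℂ] M))
    (hDdeg : ∀ (i : ℕ) (k : ℤ), (V k).map (D i) ≤ V (k + 1 - 2 * (i : ℤ)))
    (hDfin : (Function.support D).Finite)
    (hdD : d = ∑ᶠ i, D i)
    (h : M →ₗ[ℂ] M)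
    (hdeg : ∀ k : ℤ, (V k).map h ≤ V (k - 1))
    (hhom : D 0 ∘ₗ h + h ∘ₗ D 0 = LinearMap.id) :
    (∃ H : M →ₗ[ℂ] M, d ∘ₗ H + H ∘ₗ d = LinearMap.id) ∧
      ∀ x : M, d x = 0 → ∃ y : M, d y = x := by
  classical
  -- the filtration
  set F : ℤ → Submodule ℂ M := fun m => ⨆ k, ⨆ _ : k ≤ m, V k with hF
  have mem_F : ∀ (k m : ℤ), k ≤ m → V k ≤ F m := fun k m hk =>
    le_iSup_of_le k (le_iSup_of_le hk le_rfl)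
  have F_mono : ∀ {m m' : ℤ}, m ≤ m' → F m ≤ F m' := by
    intro m m' hmm'
    exact iSup_le fun k => iSup_le fun hk => mem_F k m' (hk.trans hmm')
  have F_bot : ∀ m : ℤ, m ≤ -2 → F m = ⊥ := by
    intro m hm
    rw [eq_bot_iff]
    refine iSup_le fun k => iSup_le fun hk => ?_
    rw [hVbdd k (Or.inl (by omega))]
  have F_top : F (N : ℤ) = ⊤ := by
    rw [eq_top_iff, ← hV.submodule_iSup_eq_top]
    refine iSup_le fun k => ?_
    by_cases hk : k ≤ (N : ℤ)
    · exact mem_F k N hk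
    · rw [hVbdd k (Or.inr (by omega))]; exact bot_le
  -- move from V-level to F-level
  have map_F : ∀ (f : M →ₗ[ℂ] M) (c : ℤ),
      (∀ k, (V k).map f ≤ F (k + c)) → ∀ m : ℤ, ∀ x ∈ F m, f x ∈ F (m + c) := by
    intro f c hf m x hx
    have : (F m).map f ≤ F (m + c) := by
      rw [hF]
      simp only [Submodule.map_iSup]
      exact iSup_le fun k => iSup_le fun hk => (hf k).trans (F_mono (by omega))
    exact this (Submodule.mem_map_of_mem hx)
  -- h lowers F-degree by one
  have hFh : ∀ m : ℤ, ∀ x ∈ F m, h x ∈ F (m - 1) := by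
    intro m x hx
    have := map_F h (-1) (fun k => (hdeg k).trans (mem_F _ _ (by omega))) m x hx
    exact F_mono (by omega) this
  -- the tail E := d - D 0 lowers F-degree by one
  set E : M →ₗ[ℂ] M := d - D 0 with hEdef
  set t : Finset ℕ := insert 0 hDfin.toFinset with ht
  have hdt : d = ∑ i ∈ t, D i := by
    rw [hdD]
    refine finsum_eq_sum_of_support_subset D ?_
    rw [ht]
    intro i hi
    simp [Set.Finite.mem_toFinset, hi]
  have hEx : ∀ x : M, E x = ∑ i ∈ t.erase 0, D i x := by
    intro x
    have h0 : (0 : ℕ) ∈ t := Finset.mem_insert_self _ _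
    have : d x = D 0 x + ∑ i ∈ t.erase 0, D i x := by
      rw [hdt, LinearMap.sum_apply]
      exact (Finset.add_sum_erase _ _ h0).symm
    simp [hEdef, this]
  have hFE : ∀ m : ℤ, ∀ x ∈ F m, E x ∈ F (m - 1) := by
    have hVE : ∀ k : ℤ, (V k).map E ≤ F (k + -1) := by
      intro k
      rintro _ ⟨x, hx, rfl⟩
      rw [hEx x]
      refine Submodule.sum_mem _ fun i hi => ?_
      have hi1 : 1 ≤ i := Nat.one_le_iff_ne_zero.mpr (Finset.ne_of_mem_erase hi)
      have := hDdeg i k (Submodule.mem_map_of_mem hx)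
      exact mem_F _ _ (by omega) this
    intro m x hx
    have := map_F E (-1) hVE m x hx
    simpa [sub_eq_add_neg] using this
  -- pass to the endomorphism ring
  have hd2' : d * d = 0 := hd2
  have hhom' : D 0 * h + h * D 0 = 1 := hhom
  set e : M →ₗ[ℂ] M := d * h + h * d - 1 with hedef
  have he : e = E * h + h * E := by
    have : E * h + h * E = (d * h + h * d) - (D 0 * h + h * D 0) := by
      rw [hEdef]; noncomm_ring
    rw [this, hhom', hedef]
  -- e lowers F-degree by two
  have hFe : ∀ m : ℤ, ∀ x ∈ F m, e x ∈ F (m - 2) := by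
    intro m x hx
    have : e x = E (h x) + h (E x) := by
      rw [he]; simp [Module.End.mul_apply]
    rw [this]
    refine Submodule.add_mem _ ?_ ?_
    · have := hFE (m - 1) (h x) (hFh m x hx)
      exact F_mono (by omega) this
    · have := hFh (m - 1) (E x) (hFE m x hx)
      exact F_mono (by omega) this
  have hFepow : ∀ (j : ℕ) (m : ℤ), ∀ x ∈ F m, (e ^ j) x ∈ F (m - 2 * j) := by
    intro j
    induction j with
    | zero => intro m x hx; simpa using hx
    | succ j ih =>
      intro m x hx
      have : (e ^ (j + 1)) x = (e ^ j) (e x) := by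
        rw [pow_succ, Module.End.mul_apply]
      rw [this]
      have := ih (m - 2) (e x) (hFe m x hx)
      exact F_mono (by push_cast; omega) this
  -- e is nilpotent
  have hen : e ^ (N + 2) = 0 := by
    ext x
    have hx : x ∈ F (N : ℤ) := by rw [F_top]; trivial
    have := hFepow (N + 2) N x hx
    have hb : F ((N : ℤ) - 2 * ((N : ℕ) + 2 : ℕ)) = ⊥ := F_bot _ (by push_cast; omega)
    rw [hb] at this
    simpa using this
  -- invert 1 + e by a geometric series
  set a : M →ₗ[ℂ] M := -e with hadef
  have han : a ^ (N + 2) = 0 := by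
    rw [hadef, neg_pow, hen, mul_zero]
  set g : M →ₗ[ℂ] M := ∑ i ∈ Finset.range (N + 2), a ^ i with hgdef
  have hg1 : g * (1 + e) = 1 := by
    have : g * (a - 1) = a ^ (N + 2) - 1 := geom_sum_mul a (N + 2)
    rw [han] at this
    have h2 : g * (1 + e) = -(g * (a - 1)) := by
      rw [hadef]; noncomm_ring
    rw [h2, this]; noncomm_ring
  have hag : Commute a g := by
    exact Commute.sum_right _ _ _ fun i _ => (Commute.refl a).pow_right i
  have hg1' : (1 + e) * g = 1 := by
    have hcomm : (1 + e) * g = g * (1 + e) := by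
      have h1 : Commute (1 + e) g := by
        have : Commute (1 - a) g := (Commute.one_left g).sub_left hag
        simpa [hadef, sub_neg_eq_add] using this
      exact h1
    rw [hcomm, hg1]
  -- d commutes with e, hence with g
  have hde : d * e = e * d := by
    rw [hedef]
    have h1 : d * (d * h + h * d - 1) = d * h * d - d := by
      rw [mul_sub, mul_add, mul_one, ← mul_assoc, ← mul_assoc, hd2', zero_mul, zero_add]
    have h2 : (d * h + h * d - 1) * d = d * h * d - d := by
      rw [sub_mul, add_mul, one_mul, mul_assoc h d d, hd2', mul_zero, add_zero]
    rw [h1, h2]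
  have hda : Commute d a := by
    have : d * a = a * d := by rw [hadef, mul_neg, neg_mul, hde]
    exact this
  have hdg : Commute d g := Commute.sum_right _ _ _ fun i _ => hda.pow_right i
  -- the contracting homotopy
  have key : d * (h * g) + (h * g) * d = 1 := by
    have h1 : (h * g) * d = (h * d) * g := by
      rw [mul_assoc, ← hdg.eq, ← mul_assoc]
    rw [h1, ← mul_assoc, ← add_mul]
    have h2 : d * h + h * d = 1 + e := by rw [hedef]; noncomm_ring
    rw [h2, hg1']
  refine ⟨⟨h * g, key⟩, ?_⟩
  intro x hx
  refine ⟨(h * g) x, ?_⟩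
  have := congrArg (fun f : M →ₗ[ℂ] M => f x) key
  simpa [Module.End.mul_apply, hx] using this
end
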